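/- arXiv:1612.04476 — 2 statements merged into one kernel-verified Lean document; each statement's English description precedes it below -/
import Mathlib

section
/- Let n ≥ 4, 1 < k < n−1 with k even, π = τφτ⁻¹φ, and ρ = φτ. Then π^{k/2} τ π^{k/2} φ ρ⁻¹ is the 3-cycle (k k+1 k+2). -/
/-- The flip of the oval track puzzle: reverses the block of the first `k`
positions (0-indexed `0,…,k-1`, i.e. tiles `1,…,k`) and fixes the rest. -/
def otFlip (n k : ℕ) : Equiv.Perm (Fin n) :=
  Function.Involutive.toPerm
    (fun i => if h : i.val < k ∧ k ≤ n then ⟨k - 1 - i.val, by omega⟩ else i)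
    (by
      intro i
      dsimp only
      by_cases h1 : i.val < k ∧ k ≤ n
      · rw [dif_pos h1]
        rw [dif_pos (show (⟨k - 1 - i.val, by omega⟩ : Fin n).val < k ∧ k ≤ n from
          ⟨by simp; omega, h1.2⟩)]
        exact Fin.ext (by simp; omega)
      · rw [dif_neg h1, dif_neg h1])

/-- The cycle on `Fin n` given (0-indexed) by a list of natural numbers. -/
def otCycle (n : ℕ) (l : List ℕ) : Equiv.Perm (Fin n) :=
  (l.filterMap (fun a => if h : a < n then some ⟨a, h⟩ else none)).formPerm

/-- Type I: preserves the parity of every tile label. -/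
def TypeI (n : ℕ) (σ : Equiv.Perm (Fin n)) : Prop :=
  ∀ i : Fin n, (σ i).val % 2 = i.val % 2

/-- Type II: reverses the parity of every tile label. -/
def TypeII (n : ℕ) (σ : Equiv.Perm (Fin n)) : Prop :=
  ∀ i : Fin n, (σ i).val % 2 ≠ i.val % 2


lemma otFlip_val (n k : ℕ) (hkn : k ≤ n) (i : Fin n) :
    ((otFlip n k) i).val = if i.val < k then k - 1 - i.val else i.val := by
  show ((Function.Involutive.toPerm _ _) i).val = _
  change (if h : i.val < k ∧ k ≤ n then (⟨k - 1 - i.val, by omega⟩ : Fin n) else i).val = _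
  by_cases h : i.val < k
  · rw [dif_pos ⟨h, hkn⟩, if_pos h]
  · rw [dif_neg (by tauto), if_neg h]

lemma otFlip_inv (n k : ℕ) : (otFlip n k)⁻¹ = otFlip n k := by
  show (Function.Involutive.toPerm _ _).symm = _
  exact Function.Involutive.toPerm_symm _

lemma tau_val (n : ℕ) (i : Fin n) : ((finRotate n) i).val = (i.val + 1) % n := by
  rcases n with _ | m
  · exact i.elim0
  · rw [finRotate_succ_apply, Fin.add_def]
    simp

lemma tau_inv_val (n : ℕ) (i : Fin n) :
    (((finRotate n)⁻¹) i).val = (i.val + (n - 1)) % n := by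
  have h0 : 0 < n := i.pos
  have : (finRotate n) ((finRotate n)⁻¹ i) = (finRotate n) ⟨(i.val + (n-1)) % n, Nat.mod_lt _ h0⟩ := by
    rw [← Equiv.Perm.mul_apply, mul_inv_cancel, Equiv.Perm.one_apply]
    refine Fin.ext ?_
    rw [tau_val]
    simp only
    rw [Nat.mod_add_mod]
    have : i.val + (n - 1) + 1 = i.val + n := by omega
    rw [this, Nat.add_mod_right, Nat.mod_eq_of_lt i.isLt]
  have := (finRotate n).injective this
  rw [this]

lemma mod_pred (n a : ℕ) (h : a < n) : (a + (n - 1)) % n = if a = 0 then n - 1 else a - 1 := by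
  rcases Nat.eq_zero_or_pos a with rfl | ha
  · rw [if_pos rfl, Nat.zero_add, Nat.mod_eq_of_lt (by omega)]
  · rw [if_neg (by omega)]
    have : a + (n - 1) = (a - 1) + n := by omega
    rw [this, Nat.add_mod_right, Nat.mod_eq_of_lt (by omega)]

lemma pi_val (n k : ℕ) (hn : 4 ≤ n) (hk1 : 1 < k) (hk2 : k < n - 1) (i : Fin n) :
    ((finRotate n * otFlip n k * (finRotate n)⁻¹ * otFlip n k) i).val
      = if i.val ≤ k then (i.val + 2) % (k + 1) else i.val := by
  have hkn : k ≤ n := by omega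
  simp only [Equiv.Perm.mul_apply]
  rw [tau_val, otFlip_val n k hkn, tau_inv_val, otFlip_val n k hkn]
  rcases lt_trichotomy i.val (k - 1) with h | h | h
  · have hphi : (if i.val < k then k - 1 - i.val else i.val) = k - 1 - i.val :=
      if_pos (by omega)
    rw [hphi]
    have e1 : (k - 1 - i.val + (n - 1)) % n = k - 2 - i.val := by
      rw [mod_pred n _ (by omega), if_neg (by omega)]; omega
    rw [e1, if_pos (by omega)]
    have e2 : k - 1 - (k - 2 - i.val) + 1 = i.val + 2 := by omega
    rw [e2, Nat.mod_eq_of_lt (by omega), if_pos (by omega),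
      Nat.mod_eq_of_lt (by omega)]
  · have hphi : (if i.val < k then k - 1 - i.val else i.val) = k - 1 - i.val :=
      if_pos (by omega)
    rw [hphi]
    have e1 : (k - 1 - i.val + (n - 1)) % n = n - 1 := by
      rw [mod_pred n _ (by omega), if_pos (by omega)]
    rw [e1, if_neg (by omega)]
    have e2 : (n - 1 + 1) % n = 0 := by
      have : n - 1 + 1 = n := by omega
      rw [this, Nat.mod_self]
    rw [e2, if_pos (by omega)]
    have : i.val + 2 = k + 1 := by omega
    rw [this, Nat.mod_self]
  · have hphi : (if i.val < k then k - 1 - i.val else i.val) = i.val :=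
      if_neg (by omega)
    rw [hphi]
    rcases eq_or_lt_of_le (show k ≤ i.val by omega) with h2 | h2
    · have e1 : (i.val + (n - 1)) % n = k - 1 := by
        rw [mod_pred n _ i.isLt, if_neg (by omega)]; omega
      rw [e1, if_pos (by omega)]
      have e2 : k - 1 - (k - 1) + 1 = 1 := by omega
      rw [e2, Nat.mod_eq_of_lt (by omega), if_pos (by omega)]
      have : i.val + 2 = (k + 1) + 1 := by omega
      rw [this, Nat.add_mod_left, Nat.mod_eq_of_lt (by omega)]
    · have e1 : (i.val + (n - 1)) % n = i.val - 1 := by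
        rw [mod_pred n _ i.isLt, if_neg (by omega)]
      rw [e1, if_neg (by omega)]
      have e2 : i.val - 1 + 1 = i.val := by omega
      rw [e2, Nat.mod_eq_of_lt i.isLt, if_neg (by omega)]

lemma pi_pow_val (n k : ℕ) (hn : 4 ≤ n) (hk1 : 1 < k) (hk2 : k < n - 1)
    (m : ℕ) (i : Fin n) :
    (((finRotate n * otFlip n k * (finRotate n)⁻¹ * otFlip n k) ^ m) i).val
      = if i.val ≤ k then (i.val + 2 * m) % (k + 1) else i.val := by
  induction m with
  | zero =>
    simp only [pow_zero, Equiv.Perm.coe_one, id_eq, Nat.mul_zero, Nat.add_zero]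
    split_ifs with h
    · rw [Nat.mod_eq_of_lt (by omega)]
    · rfl
  | succ m ih =>
    rw [pow_succ', Equiv.Perm.mul_apply, pi_val n k hn hk1 hk2, ih]
    by_cases h : i.val ≤ k
    · rw [if_pos h, if_pos h,
        if_pos (by have := Nat.mod_lt (i.val + 2 * m) (show 0 < k + 1 by omega); omega),
        Nat.mod_add_mod]
      congr 1
    · rw [if_neg h, if_neg h, if_neg h]

lemma otCycle_val (n k : ℕ) (hn : 4 ≤ n) (hk1 : 1 < k) (hk2 : k < n - 1) (i : Fin n) :
    ((otCycle n [k - 1, k, k + 1]) i).val =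
      if i.val = k - 1 then k else if i.val = k then k + 1
        else if i.val = k + 1 then k - 1 else i.val := by
  have h1 : k - 1 < n := by omega
  have h2 : k < n := by omega
  have h3 : k + 1 < n := by omega
  have hl : ([k - 1, k, k + 1].filterMap
      (fun a => if h : a < n then some (⟨a, h⟩ : Fin n) else none))
      = [⟨k - 1, h1⟩, ⟨k, h2⟩, ⟨k + 1, h3⟩] := by
    simp only [List.filterMap_cons, List.filterMap_nil, dif_pos h1, dif_pos h2, dif_pos h3]
  rw [otCycle, hl]
  have hform : List.formPerm [(⟨k - 1, h1⟩ : Fin n), ⟨k, h2⟩, ⟨k + 1, h3⟩]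
      = Equiv.swap ⟨k - 1, h1⟩ ⟨k, h2⟩ * Equiv.swap ⟨k, h2⟩ ⟨k + 1, h3⟩ := by
    simp [List.formPerm]
  rw [hform, Equiv.Perm.mul_apply]
  set a : Fin n := ⟨k - 1, h1⟩ with ha
  set b : Fin n := ⟨k, h2⟩ with hb
  set c : Fin n := ⟨k + 1, h3⟩ with hc
  have hab : a ≠ b := by simp only [ha, hb, ne_eq, Fin.mk.injEq]; omega
  have hac : a ≠ c := by simp only [ha, hc, ne_eq, Fin.mk.injEq]; omega
  have hbc : b ≠ c := by simp only [hb, hc, ne_eq, Fin.mk.injEq]; omega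
  rcases eq_or_ne i a with rfl | hia
  · rw [Equiv.swap_apply_of_ne_of_ne hab hac, Equiv.swap_apply_left, if_pos rfl]
  · rcases eq_or_ne i b with rfl | hib
    · rw [Equiv.swap_apply_left, Equiv.swap_apply_of_ne_of_ne hac.symm hbc.symm,
        if_neg (by simp only [hb]; omega), if_pos rfl]
    · rcases eq_or_ne i c with rfl | hic
      · rw [Equiv.swap_apply_right, Equiv.swap_apply_right,
          if_neg (by simp only [hc]; omega), if_neg (by simp only [hc]; omega), if_pos rfl]
      · rw [Equiv.swap_apply_of_ne_of_ne hib hic, Equiv.swap_apply_of_ne_of_ne hia hib,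
          if_neg (by rw [ha] at hia; exact fun hh => hia (Fin.ext hh)),
          if_neg (by rw [hb] at hib; exact fun hh => hib (Fin.ext hh)),
          if_neg (by rw [hc] at hic; exact fun hh => hic (Fin.ext hh))]

theorem stmt14 (n k : ℕ) (hn : 4 ≤ n) (hk1 : 1 < k) (hk2 : k < n - 1)
    (hke : Even k) :
    (finRotate n * otFlip n k * (finRotate n)⁻¹ * otFlip n k) ^ (k / 2) *
        finRotate n *
        (finRotate n * otFlip n k * (finRotate n)⁻¹ * otFlip n k) ^ (k / 2) *
        otFlip n k * (otFlip n k * finRotate n)⁻¹ =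
      otCycle n [k - 1, k, k + 1] := by
  have hkn : k ≤ n := by omega
  have h2k : 2 * (k / 2) = k := by
    obtain ⟨t, rfl⟩ := hke; omega
  have step_phi : ∀ (x : Fin n) (hx : x.val < k),
      otFlip n k x = ⟨k - 1 - x.val, by omega⟩ :=
    fun x hx => Fin.ext (by rw [otFlip_val n k hkn, if_pos hx])
  have step_phi' : ∀ (x : Fin n), ¬ x.val < k → otFlip n k x = x :=
    fun x hx => Fin.ext (by rw [otFlip_val n k hkn, if_neg hx])
  have step_tinv : ∀ (x y : Fin n), (x.val + (n - 1)) % n = y.val →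
      (finRotate n)⁻¹ x = y :=
    fun x y hy => Fin.ext (by rw [tau_inv_val, hy])
  have step_tau : ∀ (x y : Fin n), (x.val + 1) % n = y.val → finRotate n x = y :=
    fun x y hy => Fin.ext (by rw [tau_val, hy])
  have step_P : ∀ (x y : Fin n), x.val ≤ k → (x.val + k) % (k + 1) = y.val →
      ((finRotate n * otFlip n k * (finRotate n)⁻¹ * otFlip n k) ^ (k / 2)) x = y :=
    fun x y hx hy => Fin.ext (by rw [pi_pow_val n k hn hk1 hk2, if_pos hx, h2k, hy])
  have step_P' : ∀ (x : Fin n), ¬ x.val ≤ k →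
      ((finRotate n * otFlip n k * (finRotate n)⁻¹ * otFlip n k) ^ (k / 2)) x = x :=
    fun x hx => Fin.ext (by rw [pi_pow_val n k hn hk1 hk2, if_neg hx])
  ext i
  rw [mul_inv_rev, otFlip_inv]
  simp only [Equiv.Perm.mul_apply]
  rw [otCycle_val n k hn hk1 hk2]
  rcases lt_trichotomy i.val (k - 1) with h | h | h
  · rw [step_phi i (by omega)]
    rw [step_tinv ⟨k - 1 - i.val, by omega⟩ ⟨k - 2 - i.val, by omega⟩
        (show (k - 1 - i.val + (n - 1)) % n = k - 2 - i.val by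
          rw [mod_pred n _ (by omega), if_neg (by omega)]; omega)]
    rw [step_phi ⟨k - 2 - i.val, by omega⟩ (show k - 2 - i.val < k by omega)]
    rw [show (⟨k - 1 - (k - 2 - i.val), by omega⟩ : Fin n) = ⟨i.val + 1, by omega⟩ from
        Fin.ext (show k - 1 - (k - 2 - i.val) = i.val + 1 by omega)]
    have hPi : ((finRotate n * otFlip n k * (finRotate n)⁻¹ * otFlip n k) ^ (k / 2))
        ⟨i.val + 1, by omega⟩ = ⟨i.val, i.isLt⟩ :=
      step_P ⟨i.val + 1, by omega⟩ ⟨i.val, i.isLt⟩ (show i.val + 1 ≤ k by omega)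
        (show (i.val + 1 + k) % (k + 1) = i.val by
          rw [show i.val + 1 + k = i.val + (k + 1) by omega, Nat.add_mod_right,
            Nat.mod_eq_of_lt (by omega)])
    rw [hPi]
    rw [step_tau ⟨i.val, i.isLt⟩ ⟨i.val + 1, by omega⟩ (show (i.val + 1) % n = i.val + 1 from Nat.mod_eq_of_lt (by omega))]
    rw [hPi]
    rw [if_neg (by omega), if_neg (by omega), if_neg (by omega)]
  · rw [step_phi i (by omega)]
    rw [show (⟨k - 1 - i.val, by omega⟩ : Fin n) = ⟨0, by omega⟩ from
        Fin.ext (show k - 1 - i.val = 0 by omega)]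
    rw [step_tinv ⟨0, by omega⟩ ⟨n - 1, by omega⟩
        (show (0 + (n - 1)) % n = n - 1 by rw [Nat.zero_add, Nat.mod_eq_of_lt (by omega)])]
    rw [step_phi' ⟨n - 1, by omega⟩ (show ¬ (n - 1 < k) by omega)]
    rw [step_P' ⟨n - 1, by omega⟩ (show ¬ (n - 1 ≤ k) by omega)]
    rw [step_tau ⟨n - 1, by omega⟩ ⟨0, by omega⟩
        (show (n - 1 + 1) % n = 0 by rw [show n - 1 + 1 = n by omega, Nat.mod_self])]
    rw [step_P ⟨0, by omega⟩ ⟨k, by omega⟩ (show 0 ≤ k by omega)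
        (show (0 + k) % (k + 1) = k by rw [Nat.zero_add, Nat.mod_eq_of_lt (by omega)])]
    rw [if_pos h]
  · rcases eq_or_lt_of_le (show k ≤ i.val by omega) with h2 | h2
    · rw [step_phi' i (by omega)]
      rw [step_tinv i ⟨k - 1, by omega⟩
          (show (i.val + (n - 1)) % n = k - 1 by
            rw [mod_pred n _ i.isLt, if_neg (by omega)]; omega)]
      rw [step_phi ⟨k - 1, by omega⟩ (show k - 1 < k by omega)]
      rw [show (⟨k - 1 - (k - 1), by omega⟩ : Fin n) = ⟨0, by omega⟩ from
          Fin.ext (show k - 1 - (k - 1) = 0 by omega)]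
      rw [step_P ⟨0, by omega⟩ ⟨k, by omega⟩ (show 0 ≤ k by omega)
          (show (0 + k) % (k + 1) = k by rw [Nat.zero_add, Nat.mod_eq_of_lt (by omega)])]
      rw [step_tau ⟨k, by omega⟩ ⟨k + 1, by omega⟩ (show (k + 1) % n = k + 1 from Nat.mod_eq_of_lt (by omega))]
      rw [step_P' ⟨k + 1, by omega⟩ (show ¬ (k + 1 ≤ k) by omega)]
      rw [if_neg (by omega), if_pos h2.symm]
    · rcases eq_or_lt_of_le (show k + 1 ≤ i.val by omega) with h3 | h3
      · have hP : ((finRotate n * otFlip n k * (finRotate n)⁻¹ * otFlip n k) ^ (k / 2))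
            ⟨k, by omega⟩ = ⟨k - 1, by omega⟩ :=
          step_P ⟨k, by omega⟩ ⟨k - 1, by omega⟩ (show k ≤ k from le_refl k)
            (show (k + k) % (k + 1) = k - 1 by
              rw [show k + k = (k - 1) + (k + 1) by omega, Nat.add_mod_right,
                Nat.mod_eq_of_lt (by omega)])
        rw [step_phi' i (by omega)]
        rw [step_tinv i ⟨k, by omega⟩
            (show (i.val + (n - 1)) % n = k by
              rw [mod_pred n _ i.isLt, if_neg (by omega)]; omega)]
        rw [step_phi' ⟨k, by omega⟩ (show ¬ (k < k) by omega)]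
        rw [hP]
        rw [step_tau ⟨k - 1, by omega⟩ ⟨k, by omega⟩
            (show (k - 1 + 1) % n = k by
              rw [show k - 1 + 1 = k by omega, Nat.mod_eq_of_lt (by omega)])]
        rw [hP]
        rw [if_neg (by omega), if_neg (by omega), if_pos h3.symm]
      · rw [step_phi' i (by omega)]
        rw [step_tinv i ⟨i.val - 1, by omega⟩
            (show (i.val + (n - 1)) % n = i.val - 1 by
              rw [mod_pred n _ i.isLt, if_neg (by omega)])]
        rw [step_phi' ⟨i.val - 1, by omega⟩ (show ¬ (i.val - 1 < k) by omega)]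
        rw [step_P' ⟨i.val - 1, by omega⟩ (show ¬ (i.val - 1 ≤ k) by omega)]
        rw [step_tau ⟨i.val - 1, by omega⟩ i
            (show (i.val - 1 + 1) % n = i.val by
              rw [show i.val - 1 + 1 = i.val by omega, Nat.mod_eq_of_lt i.isLt])]
        rw [step_P' i (by omega)]
        rw [if_neg (by omega), if_neg (by omega), if_neg (by omega)]
end

section
/- Let n ≥ 4 and 1 < k < n−1. If n and k are both even, or if n is odd, then the alternating group A_n is contained in OT_{n,k} = ⟨τ, φ⟩. -/
section AuxTrip
open Equiv Equiv.Perm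
open Fin.NatCast Fin.CommRing

variable {α : Type*} [DecidableEq α]

def trip (x y z : α) : Equiv.Perm α := Equiv.swap x y * Equiv.swap y z

lemma trip_conj (σ : Perm α) (x y z : α) :
    σ * trip x y z * σ⁻¹ = trip (σ x) (σ y) (σ z) := by
  simp only [trip, swap_apply_apply]; group

lemma trip_apply_fst {x y z : α} (h1 : x ≠ y) (h2 : x ≠ z) : trip x y z x = y := by
  rw [trip, mul_apply, swap_apply_of_ne_of_ne h1 h2, swap_apply_left]

lemma trip_apply_snd {x y z : α} (h1 : x ≠ z) (h2 : y ≠ z) : trip x y z y = z := by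
  rw [trip, mul_apply, swap_apply_left, swap_apply_of_ne_of_ne h1.symm h2.symm]

lemma trip_apply_thd (x y z : α) : trip x y z z = x := by
  rw [trip, mul_apply, swap_apply_right, swap_apply_right]

lemma trip_apply_other {x y z w : α} (h1 : w ≠ x) (h2 : w ≠ y) (h3 : w ≠ z) :
    trip x y z w = w := by
  rw [trip, mul_apply, swap_apply_of_ne_of_ne h2 h3, swap_apply_of_ne_of_ne h1 h2]

lemma trip_rotate {x y z : α} (h1 : x ≠ y) (h2 : x ≠ z) (h3 : y ≠ z) :
    trip x y z = trip y z x := by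
  ext w
  rcases eq_or_ne w x with rfl|hwx
  · rw [trip_apply_fst h1 h2, trip_apply_thd]
  rcases eq_or_ne w y with rfl|hwy
  · rw [trip_apply_snd h2 h3, trip_apply_fst h3 h1.symm]
  rcases eq_or_ne w z with rfl|hwz
  · rw [trip_apply_thd, trip_apply_snd h1.symm h2.symm]
  · rw [trip_apply_other hwx hwy hwz, trip_apply_other hwy hwz hwx]

lemma trip_inv {x y z : α} (h1 : x ≠ y) (h2 : x ≠ z) (h3 : y ≠ z) :
    (trip x y z)⁻¹ = trip x z y := by
  rw [eq_comm, eq_inv_iff_mul_eq_one]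
  ext w
  rw [mul_apply, one_apply]
  rcases eq_or_ne w x with rfl|hwx
  · rw [trip_apply_fst h1 h2, trip_apply_thd]
  rcases eq_or_ne w y with rfl|hwy
  · rw [trip_apply_snd h2 h3, trip_apply_snd h1 h3.symm]
  rcases eq_or_ne w z with rfl|hwz
  · rw [trip_apply_thd, trip_apply_fst h2 h1]
  · rw [trip_apply_other hwx hwy hwz, trip_apply_other hwx hwz hwy]

/-- key commutator identity -/
lemma trip_comm {a b x c d : α} (hab : a ≠ b) (hax : a ≠ x) (hbx : b ≠ x)
    (hca : c ≠ a) (hcb : c ≠ b) (hcx : c ≠ x) (hda : d ≠ a) (hdb : d ≠ b)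
    (hdx : d ≠ x) (hcd : c ≠ d) :
    trip a c x = trip a b x * trip x c d * (trip a b x)⁻¹ * (trip x c d)⁻¹ := by
  have e1 : trip a b x * trip x c d * (trip a b x)⁻¹ = trip a c d := by
    rw [trip_conj, trip_apply_thd, trip_apply_other hca hcb hcx,
      trip_apply_other hda hdb hdx]
  rw [e1, trip_inv hcx.symm hdx.symm hcd]
  ext w
  rw [mul_apply]
  rcases eq_or_ne w a with rfl|hwa
  · rw [trip_apply_other hax hda.symm hca.symm, trip_apply_fst hca.symm hda.symm,
      trip_apply_fst hca.symm hax]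
  rcases eq_or_ne w c with rfl|hwc
  · rw [trip_apply_thd, trip_apply_other hax.symm hcx.symm hdx.symm, trip_apply_snd hax hcx]
  rcases eq_or_ne w x with rfl|hwx
  · rw [trip_apply_fst hdx.symm hcx.symm, trip_apply_thd, trip_apply_thd]
  rcases eq_or_ne w d with rfl|hwd
  · rw [trip_apply_snd hcx.symm hcd.symm, trip_apply_snd hda.symm hcd,
      trip_apply_other hda hcd.symm hdx]
  · rw [trip_apply_other hwx hwd hwc, trip_apply_other hwa hwc hwd,
      trip_apply_other hwa hwc hwx]


section moves
variable {n : ℕ} [NeZero n] {H : Subgroup (Perm (Fin n))}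

lemma rot_apply (hn : 2 ≤ n) (i : Fin n) : finRotate n i = i + 1 := by
  rcases n with _|m
  · omega
  · exact finRotate_succ_apply i

lemma rot_pow_apply (hn : 2 ≤ n) (j : ℕ) (i : Fin n) :
    ((finRotate n) ^ j) i = i + (j : Fin n) := by
  induction j with
  | zero => simp
  | succ m ih =>
    rw [pow_succ', mul_apply, ih, rot_apply hn, Nat.cast_add, Nat.cast_one, add_assoc]

lemma moveShift (hn : 2 ≤ n) (hτ : finRotate n ∈ H) {x y z : Fin n} (j : ℕ)
    (h : trip x y z ∈ H) : trip (x + (j : Fin n)) (y + (j : Fin n)) (z + (j : Fin n)) ∈ H := by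
  have := H.mul_mem (H.mul_mem (H.pow_mem hτ j) h) (H.inv_mem (H.pow_mem hτ j))
  rwa [trip_conj, rot_pow_apply hn, rot_pow_apply hn, rot_pow_apply hn] at this

lemma moveI {u v : Fin n} (h0u : (0:Fin n) ≠ u) (h0v : (0:Fin n) ≠ v) (huv : u ≠ v)
    (h : trip 0 u v ∈ H) : trip 0 v u ∈ H := by
  have := H.inv_mem h
  rwa [trip_inv h0u h0v huv] at this

lemma fin_pos_of_ne {u : Fin n} (h : (0:Fin n) ≠ u) : 0 < u.val := by
  rcases Nat.eq_zero_or_pos u.val with h'|h'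
  · exact absurd (Fin.ext h'.symm : (0:Fin n) = u) h
  · exact h'

lemma moveR (hn : 2 ≤ n) (hτ : finRotate n ∈ H) {u v : Fin n}
    (h0u : (0:Fin n) ≠ u) (h0v : (0:Fin n) ≠ v) (huv : u ≠ v)
    (h : trip 0 u v ∈ H) : trip 0 (v - u) (-u) ∈ H := by
  rw [trip_rotate h0u h0v huv] at h
  have h2 := moveShift hn hτ (n - u.val) h
  have hu : 0 < u.val := fin_pos_of_ne h0u
  have hmod : (n - u.val) % n = n - u.val := Nat.mod_eq_of_lt (by omega)
  have e1 : u + ((n - u.val : ℕ) : Fin n) = 0 := by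
    rw [Fin.ext_iff, Fin.add_def, Fin.val_natCast, hmod]
    simp only [Fin.val_zero]
    have : u.val + (n - u.val) = n := by omega
    rw [this, Nat.mod_self]
  have e2 : v + ((n - u.val : ℕ) : Fin n) = v - u := by
    rw [Fin.ext_iff, Fin.add_def, Fin.sub_def, Fin.val_natCast, hmod, Nat.add_comm]
  have e3 : (0 : Fin n) + ((n - u.val : ℕ) : Fin n) = -u := by
    rw [zero_add, Fin.ext_iff, Fin.val_natCast, Fin.neg_def]
  rwa [e1, e2, e3] at h2

lemma moveA (hn : 2 ≤ n) (hτ : finRotate n ∈ H) {u v : Fin n}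
    (h0u : (0:Fin n) ≠ u) (h0v : (0:Fin n) ≠ v) (huv : u ≠ v)
    (h1 : u + v ≠ 0) (h2 : v + v ≠ 0) (h3 : v + v ≠ u)
    (h : trip 0 u v ∈ H) : trip 0 (u + v) v ∈ H := by
  have hs := moveShift hn hτ v.val h
  rw [Fin.cast_val_eq_self, zero_add] at hs
  have key := trip_comm (a := (0:Fin n)) (b := u) (x := v) (c := u + v) (d := v + v)
    h0u h0v huv h1
    (fun hc => h0v ((add_eq_left.mp hc).symm))
    (fun hc => h0u ((add_eq_right.mp hc).symm))
    h2 h3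
    (fun hc => h0v ((add_eq_left.mp hc).symm))
    (fun hc => huv (add_right_cancel hc))
  rw [key]
  exact H.mul_mem (H.mul_mem (H.mul_mem h hs) (H.inv_mem h)) (H.inv_mem hs)
end moves


section moves
variable {n : ℕ} [NeZero n] {H : Subgroup (Perm (Fin n))}

omit [NeZero n] in
lemma mod2n {a : ℕ} (h : a < 2*n) : (a < n ∧ a % n = a) ∨ (n ≤ a ∧ a % n + n = a) := by
  rcases Nat.lt_or_ge a n with h'|h'
  · exact Or.inl ⟨h', Nat.mod_eq_of_lt h'⟩
  · refine Or.inr ⟨h', ?_⟩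
    rw [Nat.mod_eq_sub_mod h', Nat.mod_eq_of_lt (by omega)]
    omega

lemma cast_ne_cast {a b : ℕ} (h : a % n ≠ b % n) : (a : Fin n) ≠ (b : Fin n) := by
  rw [Ne, Fin.ext_iff, Fin.val_natCast, Fin.val_natCast]; exact h

lemma cast_ne_zero' {a : ℕ} (h : a % n ≠ 0) : (a : Fin n) ≠ 0 := by
  rw [Ne, Fin.ext_iff, Fin.val_natCast, Fin.val_zero]; exact h

lemma fin_add_cast (a b : ℕ) : (a : Fin n) + (b : Fin n) = ((a + b : ℕ) : Fin n) := by
  push_cast; ring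

lemma fin_cast_eq_cast {a b : ℕ} (h : a % n = b % n) : (a : Fin n) = (b : Fin n) := by
  rw [Fin.ext_iff, Fin.val_natCast, Fin.val_natCast]; exact h

-- the C family: C m = trip 0 ↑m ↑2
lemma climbStep (hn : 5 ≤ n) (hτ : finRotate n ∈ H) {m : ℕ} (hm : m < n)
    (h0 : m ≠ 0) (h2 : m ≠ 2) (h4 : m ≠ 4) (hn2 : m ≠ n - 2)
    (h : trip 0 ((m:ℕ) : Fin n) ((2:ℕ) : Fin n) ∈ H) :
    trip 0 ((m+2 : ℕ) : Fin n) ((2:ℕ) : Fin n) ∈ H := by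
  have hA := moveA (by omega) hτ (u := ((m:ℕ) : Fin n)) (v := ((2:ℕ) : Fin n))
    (cast_ne_zero' (by rw [Nat.mod_eq_of_lt hm]; omega)).symm
    (cast_ne_zero' (by rw [Nat.mod_eq_of_lt (by omega : 2 < n)]; omega)).symm
    (cast_ne_cast (by rw [Nat.mod_eq_of_lt hm, Nat.mod_eq_of_lt (by omega : 2 < n)]; omega))
    (by rw [fin_add_cast]
        exact cast_ne_zero' (by
          rcases mod2n (n := n) (a := m + 2) (by omega) with ⟨x1,x2⟩|⟨x1,x2⟩ <;> omega))
    (by rw [fin_add_cast]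
        exact cast_ne_zero' (by rw [Nat.mod_eq_of_lt (by omega : 4 < n)]; omega))
    (by rw [fin_add_cast]
        exact cast_ne_cast (by
          rw [Nat.mod_eq_of_lt (by omega : 4 < n), Nat.mod_eq_of_lt hm]; omega))
    h
  rwa [fin_add_cast] at hA

lemma fin_sub_cast (a b : ℕ) (hb : b < n) :
    ((a : Fin n) - (b : Fin n)) = ((a + (n - b) : ℕ) : Fin n) := by
  rw [Fin.ext_iff, Fin.sub_def]
  simp only [Fin.val_natCast]
  rw [Nat.mod_eq_of_lt hb, Nat.add_comm (n - b) (a % n), Nat.mod_add_mod]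

lemma fin_neg_cast (b : ℕ) (hb : b < n) : (-(b : Fin n)) = ((n - b : ℕ) : Fin n) := by
  rw [Fin.ext_iff, Fin.neg_def]
  simp only [Fin.val_natCast]
  rw [Nat.mod_eq_of_lt hb]

lemma descendStep (hn : 5 ≤ n) (hτ : finRotate n ∈ H) {m : ℕ} (hm : m < n)
    (h3m : 3 ≤ m) (h4 : m ≠ 4) (hn2 : m ≠ n - 2)
    (h : trip 0 ((m:ℕ) : Fin n) ((2:ℕ) : Fin n) ∈ H) :
    trip 0 ((m-2 : ℕ) : Fin n) ((2:ℕ) : Fin n) ∈ H := by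
  have n2 : (2:ℕ) < n := by omega
  have c2 : ((2:ℕ):Fin n).val = 2 := by rw [Fin.val_natCast, Nat.mod_eq_of_lt n2]
  have cm : ((m:ℕ):Fin n).val = m := by rw [Fin.val_natCast, Nat.mod_eq_of_lt hm]
  -- I
  have s1 : trip 0 ((2:ℕ) : Fin n) ((m:ℕ) : Fin n) ∈ H :=
    moveI (cast_ne_zero' (by rw [Nat.mod_eq_of_lt hm]; omega)).symm
      (cast_ne_zero' (by rw [Nat.mod_eq_of_lt n2]; omega)).symm
      (cast_ne_cast (by rw [Nat.mod_eq_of_lt hm, Nat.mod_eq_of_lt n2]; omega)) h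
  -- R
  have s2' := moveR (by omega) hτ
    (cast_ne_zero' (by rw [Nat.mod_eq_of_lt n2]; omega)).symm
    (cast_ne_zero' (by rw [Nat.mod_eq_of_lt hm]; omega)).symm
    (cast_ne_cast (by rw [Nat.mod_eq_of_lt hm, Nat.mod_eq_of_lt n2]; omega)).symm s1
  rw [fin_sub_cast m 2 n2, fin_neg_cast 2 n2] at s2'
  have e1 : ((m + (n-2) : ℕ) : Fin n) = ((m - 2 : ℕ) : Fin n) :=
    fin_cast_eq_cast (by
      rcases mod2n (n := n) (a := m + (n-2)) (by omega) with ⟨x1,x2⟩|⟨x1,x2⟩ <;>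
        rw [Nat.mod_eq_of_lt (by omega : m - 2 < n)] <;> omega)
  rw [e1] at s2'
  -- A
  have s3 := moveA (by omega) hτ
    (cast_ne_zero' (by rw [Nat.mod_eq_of_lt (by omega : m - 2 < n)]; omega)).symm
    (cast_ne_zero' (by rw [Nat.mod_eq_of_lt (by omega : n - 2 < n)]; omega)).symm
    (cast_ne_cast (by rw [Nat.mod_eq_of_lt (by omega : m - 2 < n),
        Nat.mod_eq_of_lt (by omega : n - 2 < n)]; omega))
    (by rw [fin_add_cast]
        exact cast_ne_zero' (by
          rcases mod2n (n := n) (a := (m-2) + (n-2)) (by omega) with ⟨x1,x2⟩|⟨x1,x2⟩ <;> omega))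
    (by rw [fin_add_cast]
        exact cast_ne_zero' (by
          rcases mod2n (n := n) (a := (n-2) + (n-2)) (by omega) with ⟨x1,x2⟩|⟨x1,x2⟩ <;> omega))
    (by rw [fin_add_cast]
        exact cast_ne_cast (by
          rcases mod2n (n := n) (a := (n-2) + (n-2)) (by omega) with ⟨x1,x2⟩|⟨x1,x2⟩ <;>
            rw [Nat.mod_eq_of_lt (by omega : m - 2 < n)] <;> omega))
    s2'
  rw [fin_add_cast] at s3
  -- I
  have s4 := moveI
    (cast_ne_zero' (by
      rcases mod2n (n := n) (a := (m-2) + (n-2)) (by omega) with ⟨x1,x2⟩|⟨x1,x2⟩ <;> omega)).symm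
    (cast_ne_zero' (by rw [Nat.mod_eq_of_lt (by omega : n - 2 < n)]; omega)).symm
    (cast_ne_cast (by
      rcases mod2n (n := n) (a := (m-2) + (n-2)) (by omega) with ⟨x1,x2⟩|⟨x1,x2⟩ <;>
        rw [Nat.mod_eq_of_lt (by omega : n - 2 < n)] <;> omega)).symm s3
  -- R
  have s5 := moveR (by omega) hτ
    (cast_ne_zero' (by rw [Nat.mod_eq_of_lt (by omega : n - 2 < n)]; omega)).symm
    (cast_ne_zero' (by
      rcases mod2n (n := n) (a := (m-2) + (n-2)) (by omega) with ⟨x1,x2⟩|⟨x1,x2⟩ <;> omega)).symm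
    (cast_ne_cast (by
      rcases mod2n (n := n) (a := (m-2) + (n-2)) (by omega) with ⟨x1,x2⟩|⟨x1,x2⟩ <;>
        rw [Nat.mod_eq_of_lt (by omega : n - 2 < n)] <;> omega)) s4
  rw [fin_sub_cast _ _ (by omega : n - 2 < n), fin_neg_cast _ (by omega : n - 2 < n)] at s5
  have e2 : ((m - 2 + (n-2) + (n - (n-2)) : ℕ) : Fin n) = ((m - 2 : ℕ) : Fin n) :=
    fin_cast_eq_cast (by
      rcases mod2n (n := n) (a := m - 2 + (n-2) + (n - (n-2))) (by omega) with ⟨x1,x2⟩|⟨x1,x2⟩ <;>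
        rw [Nat.mod_eq_of_lt (by omega : m - 2 < n)] <;> omega)
  have e3 : ((n - (n-2) : ℕ) : Fin n) = ((2:ℕ) : Fin n) :=
    fin_cast_eq_cast (by rw [Nat.mod_eq_of_lt (by omega : n - (n-2) < n), Nat.mod_eq_of_lt n2]; omega)
  rwa [e2, e3] at s5
end moves

section loops
variable {n : ℕ} [NeZero n] {H : Subgroup (Perm (Fin n))}

lemma climbLoop (hn : 5 ≤ n) (hτ : finRotate n ∈ H) {m0 : ℕ} (h5 : 5 ≤ m0) (hle : m0 ≤ n-1)
    (hpar : (n - 1 - m0) % 2 = 0) (h : trip 0 ((m0:ℕ) : Fin n) ((2:ℕ) : Fin n) ∈ H) :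
    trip 0 ((1:ℕ) : Fin n) ((2:ℕ) : Fin n) ∈ H := by
  have loop : ∀ j, m0 + 2*j ≤ n-1 → trip 0 ((m0 + 2*j : ℕ) : Fin n) ((2:ℕ) : Fin n) ∈ H := by
    intro j
    induction j with
    | zero => intro _; simpa using h
    | succ i ih =>
      intro hj
      have hi := ih (by omega)
      have := climbStep hn hτ (m := m0 + 2*i) (by omega) (by omega) (by omega) (by omega)
        (by omega) hi
      rwa [show m0 + 2*i + 2 = m0 + 2*(i+1) by ring] at this
  have hend := loop ((n-1-m0)/2) (by omega)
  rw [show m0 + 2*((n-1-m0)/2) = n-1 by omega] at hend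
  have := climbStep hn hτ (m := n-1) (by omega) (by omega) (by omega) (by omega) (by omega) hend
  rwa [show ((n-1+2 : ℕ) : Fin n) = ((1:ℕ) : Fin n) from fin_cast_eq_cast (by
    rcases mod2n (n := n) (a := n-1+2) (by omega) with ⟨x1,x2⟩|⟨x1,x2⟩ <;>
      rw [Nat.mod_eq_of_lt (by omega : 1 < n)] <;> omega)] at this

lemma descendLoop (hn : 5 ≤ n) (hτ : finRotate n ∈ H) {m0 : ℕ} (hodd : m0 % 2 = 1)
    (hle : m0 ≤ n-3) (h : trip 0 ((m0:ℕ) : Fin n) ((2:ℕ) : Fin n) ∈ H) :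
    trip 0 ((1:ℕ) : Fin n) ((2:ℕ) : Fin n) ∈ H := by
  have loop : ∀ j, 2*j ≤ m0 - 1 → trip 0 ((m0 - 2*j : ℕ) : Fin n) ((2:ℕ) : Fin n) ∈ H := by
    intro j
    induction j with
    | zero => intro _; simpa using h
    | succ i ih =>
      intro hj
      have hi := ih (by omega)
      have := descendStep hn hτ (m := m0 - 2*i) (by omega) (by omega) (by omega) (by omega) hi
      rwa [show m0 - 2*i - 2 = m0 - 2*(i+1) by omega] at this
  have hend := loop ((m0-1)/2) (by omega)
  rwa [show m0 - 2*((m0-1)/2) = 1 by omega] at hend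

lemma escape4 (hn : 7 ≤ n) (hodd : n % 2 = 1) (hτ : finRotate n ∈ H)
    (h : trip 0 ((4:ℕ) : Fin n) ((2:ℕ) : Fin n) ∈ H) :
    trip 0 ((6:ℕ) : Fin n) ((2:ℕ) : Fin n) ∈ H := by
  have s1 := moveR (by omega) hτ
    (cast_ne_zero' (by rw [Nat.mod_eq_of_lt (by omega : 4 < n)]; omega)).symm
    (cast_ne_zero' (by rw [Nat.mod_eq_of_lt (by omega : 2 < n)]; omega)).symm
    (cast_ne_cast (by rw [Nat.mod_eq_of_lt (by omega : 4 < n),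
      Nat.mod_eq_of_lt (by omega : 2 < n)]; omega)) h
  rw [fin_sub_cast 2 4 (by omega), fin_neg_cast 4 (by omega),
    show ((2 + (n-4) : ℕ) : Fin n) = ((n-2 : ℕ) : Fin n) from fin_cast_eq_cast (by
      rw [Nat.mod_eq_of_lt (by omega : 2 + (n-4) < n), Nat.mod_eq_of_lt (by omega : n-2 < n)]
      omega)] at s1
  -- s1 : trip 0 ↑(n-2) ↑(n-4) ∈ H
  have s2 := moveA (by omega) hτ
    (cast_ne_zero' (by rw [Nat.mod_eq_of_lt (by omega : n-2 < n)]; omega)).symm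
    (cast_ne_zero' (by rw [Nat.mod_eq_of_lt (by omega : n-4 < n)]; omega)).symm
    (cast_ne_cast (by rw [Nat.mod_eq_of_lt (by omega : n-2 < n),
      Nat.mod_eq_of_lt (by omega : n-4 < n)]; omega))
    (by rw [fin_add_cast]
        exact cast_ne_zero' (by
          rcases mod2n (n := n) (a := (n-2) + (n-4)) (by omega) with ⟨x1,x2⟩|⟨x1,x2⟩ <;> omega))
    (by rw [fin_add_cast]
        exact cast_ne_zero' (by
          rcases mod2n (n := n) (a := (n-4) + (n-4)) (by omega) with ⟨x1,x2⟩|⟨x1,x2⟩ <;> omega))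
    (by rw [fin_add_cast]
        exact cast_ne_cast (by
          rcases mod2n (n := n) (a := (n-4) + (n-4)) (by omega) with ⟨x1,x2⟩|⟨x1,x2⟩ <;>
            rw [Nat.mod_eq_of_lt (by omega : n-2 < n)] <;> omega))
    s1
  rw [fin_add_cast,
    show ((n-2 + (n-4) : ℕ) : Fin n) = ((n-6 : ℕ) : Fin n) from fin_cast_eq_cast (by
      rcases mod2n (n := n) (a := (n-2) + (n-4)) (by omega) with ⟨x1,x2⟩|⟨x1,x2⟩ <;>
        rw [Nat.mod_eq_of_lt (by omega : n-6 < n)] <;> omega)] at s2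
  -- s2 : trip 0 ↑(n-6) ↑(n-4) ∈ H
  have s3 := moveR (by omega) hτ
    (cast_ne_zero' (by rw [Nat.mod_eq_of_lt (by omega : n-6 < n)]; omega)).symm
    (cast_ne_zero' (by rw [Nat.mod_eq_of_lt (by omega : n-4 < n)]; omega)).symm
    (cast_ne_cast (by rw [Nat.mod_eq_of_lt (by omega : n-6 < n),
      Nat.mod_eq_of_lt (by omega : n-4 < n)]; omega)) s2
  rw [fin_sub_cast (n-4) (n-6) (by omega), fin_neg_cast (n-6) (by omega),
    show ((n-4 + (n - (n-6)) : ℕ) : Fin n) = ((2:ℕ) : Fin n) from fin_cast_eq_cast (by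
      rcases mod2n (n := n) (a := n-4 + (n - (n-6))) (by omega) with ⟨x1,x2⟩|⟨x1,x2⟩ <;>
        rw [Nat.mod_eq_of_lt (by omega : 2 < n)] <;> omega),
    show ((n - (n-6) : ℕ) : Fin n) = ((6:ℕ) : Fin n) from fin_cast_eq_cast (by
      rw [Nat.mod_eq_of_lt (by omega : n - (n-6) < n), Nat.mod_eq_of_lt (by omega : 6 < n)]
      omega)] at s3
  -- s3 : trip 0 ↑2 ↑6 ∈ H
  exact moveI
    (cast_ne_zero' (by rw [Nat.mod_eq_of_lt (by omega : 2 < n)]; omega)).symm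
    (cast_ne_zero' (by rw [Nat.mod_eq_of_lt (by omega : 6 < n)]; omega)).symm
    (cast_ne_cast (by rw [Nat.mod_eq_of_lt (by omega : 2 < n),
      Nat.mod_eq_of_lt (by omega : 6 < n)]; omega)) s3

lemma entryR (hn : 5 ≤ n) (hτ : finRotate n ∈ H) {k : ℕ} (hk1 : 2 ≤ k) (hk2 : k ≤ n - 2)
    (h : trip 0 ((n-2 : ℕ) : Fin n) ((k-1 : ℕ) : Fin n) ∈ H) :
    trip 0 ((k+1 : ℕ) : Fin n) ((2:ℕ) : Fin n) ∈ H := by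
  have s1 := moveR (by omega) hτ
    (cast_ne_zero' (by rw [Nat.mod_eq_of_lt (by omega : n-2 < n)]; omega)).symm
    (cast_ne_zero' (by rw [Nat.mod_eq_of_lt (by omega : k-1 < n)]; omega)).symm
    (cast_ne_cast (by rw [Nat.mod_eq_of_lt (by omega : n-2 < n),
      Nat.mod_eq_of_lt (by omega : k-1 < n)]; omega)) h
  rwa [fin_sub_cast (k-1) (n-2) (by omega), fin_neg_cast (n-2) (by omega),
    show ((k-1 + (n - (n-2)) : ℕ) : Fin n) = ((k+1 : ℕ) : Fin n) from fin_cast_eq_cast (by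
      rw [Nat.mod_eq_of_lt (by omega : k-1 + (n-(n-2)) < n), Nat.mod_eq_of_lt (by omega : k+1 < n)]
      omega),
    show ((n - (n-2) : ℕ) : Fin n) = ((2:ℕ) : Fin n) from fin_cast_eq_cast (by
      rw [Nat.mod_eq_of_lt (by omega : n - (n-2) < n), Nat.mod_eq_of_lt (by omega : 2 < n)]
      omega)] at s1
end loops

section assembly
variable {n : ℕ} [NeZero n] {H : Subgroup (Perm (Fin n))}

lemma wrapConvert (hn : 5 ≤ n) (hτ : finRotate n ∈ H)
    (h : trip 0 ((n-1 : ℕ) : Fin n) ((1:ℕ) : Fin n) ∈ H) :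
    trip 0 ((1:ℕ) : Fin n) ((2:ℕ) : Fin n) ∈ H := by
  have hs := moveShift (by omega) hτ 1 h
  rw [zero_add, fin_add_cast, fin_add_cast,
    show ((n-1+1 : ℕ) : Fin n) = 0 from by
      rw [show n-1+1 = n by omega]; exact Fin.natCast_self n] at hs
  -- hs : trip ↑1 0 ↑2 ∈ H
  rw [trip_rotate (x := ((1:ℕ) : Fin n)) (y := (0 : Fin n)) (z := ((2:ℕ) : Fin n))
    (cast_ne_zero' (by rw [Nat.mod_eq_of_lt (by omega : 1 < n)]; omega))
    (cast_ne_cast (by rw [Nat.mod_eq_of_lt (by omega : 1 < n),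
      Nat.mod_eq_of_lt (by omega : 2 < n)]; omega))
    (cast_ne_zero' (by rw [Nat.mod_eq_of_lt (by omega : 2 < n)]; omega)).symm] at hs
  -- hs : trip 0 ↑2 ↑1
  exact moveI
    (cast_ne_zero' (by rw [Nat.mod_eq_of_lt (by omega : 2 < n)]; omega)).symm
    (cast_ne_zero' (by rw [Nat.mod_eq_of_lt (by omega : 1 < n)]; omega)).symm
    (cast_ne_cast (by rw [Nat.mod_eq_of_lt (by omega : 1 < n),
      Nat.mod_eq_of_lt (by omega : 2 < n)]; omega)).symm hs

lemma directA (hn : 5 ≤ n) (hτ : finRotate n ∈ H)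
    (h : trip 0 ((n-2 : ℕ) : Fin n) ((1:ℕ) : Fin n) ∈ H) :
    trip 0 ((1:ℕ) : Fin n) ((2:ℕ) : Fin n) ∈ H := by
  have hA := moveA (by omega) hτ
    (cast_ne_zero' (by rw [Nat.mod_eq_of_lt (by omega : n-2 < n)]; omega)).symm
    (cast_ne_zero' (by rw [Nat.mod_eq_of_lt (by omega : 1 < n)]; omega)).symm
    (cast_ne_cast (by rw [Nat.mod_eq_of_lt (by omega : n-2 < n),
      Nat.mod_eq_of_lt (by omega : 1 < n)]; omega))
    (by rw [fin_add_cast]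
        exact cast_ne_zero' (by rw [Nat.mod_eq_of_lt (by omega : n-2+1 < n)]; omega))
    (by rw [fin_add_cast]
        exact cast_ne_zero' (by rw [Nat.mod_eq_of_lt (by omega : 1+1 < n)]; omega))
    (by rw [fin_add_cast]
        exact cast_ne_cast (by rw [Nat.mod_eq_of_lt (by omega : 1+1 < n),
          Nat.mod_eq_of_lt (by omega : n-2 < n)]; omega))
    h
  rw [fin_add_cast, show ((n-2+1 : ℕ) : Fin n) = ((n-1 : ℕ) : Fin n) from
    fin_cast_eq_cast (by rw [show n-2+1 = n-1 by omega])] at hA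
  exact wrapConvert hn hτ hA

lemma R4general (hn : 5 ≤ n) (hτ : finRotate n ∈ H)
    (h : trip 0 ((4:ℕ) : Fin n) ((2:ℕ) : Fin n) ∈ H) :
    trip 0 ((n-2 : ℕ) : Fin n) ((n-4 : ℕ) : Fin n) ∈ H := by
  have s1 := moveR (by omega) hτ
    (cast_ne_zero' (by rw [Nat.mod_eq_of_lt (by omega : 4 < n)]; omega)).symm
    (cast_ne_zero' (by rw [Nat.mod_eq_of_lt (by omega : 2 < n)]; omega)).symm
    (cast_ne_cast (by rw [Nat.mod_eq_of_lt (by omega : 4 < n),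
      Nat.mod_eq_of_lt (by omega : 2 < n)]; omega)) h
  rwa [fin_sub_cast 2 4 (by omega), fin_neg_cast 4 (by omega),
    show ((2 + (n-4) : ℕ) : Fin n) = ((n-2 : ℕ) : Fin n) from fin_cast_eq_cast (by
      rw [Nat.mod_eq_of_lt (by omega : 2 + (n-4) < n), Nat.mod_eq_of_lt (by omega : n-2 < n)]
      omega)] at s1

lemma Rn2to4 (hn : 5 ≤ n) (hτ : finRotate n ∈ H)
    (h : trip 0 ((n-2 : ℕ) : Fin n) ((2:ℕ) : Fin n) ∈ H) :
    trip 0 ((4:ℕ) : Fin n) ((2:ℕ) : Fin n) ∈ H := by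
  have s1 := moveR (by omega) hτ
    (cast_ne_zero' (by rw [Nat.mod_eq_of_lt (by omega : n-2 < n)]; omega)).symm
    (cast_ne_zero' (by rw [Nat.mod_eq_of_lt (by omega : 2 < n)]; omega)).symm
    (cast_ne_cast (by rw [Nat.mod_eq_of_lt (by omega : n-2 < n),
      Nat.mod_eq_of_lt (by omega : 2 < n)]; omega)) h
  rwa [fin_sub_cast 2 (n-2) (by omega), fin_neg_cast (n-2) (by omega),
    show ((2 + (n - (n-2)) : ℕ) : Fin n) = ((4:ℕ) : Fin n) from fin_cast_eq_cast (by
      rw [Nat.mod_eq_of_lt (by omega : 2 + (n-(n-2)) < n), Nat.mod_eq_of_lt (by omega : 4 < n)]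
      omega),
    show ((n - (n-2) : ℕ) : Fin n) = ((2:ℕ) : Fin n) from fin_cast_eq_cast (by
      rw [Nat.mod_eq_of_lt (by omega : n - (n-2) < n), Nat.mod_eq_of_lt (by omega : 2 < n)]
      omega)] at s1

lemma toConsec (hn : 5 ≤ n) (hτ : finRotate n ∈ H) {k : ℕ} (hk1 : 2 ≤ k) (hk2 : k ≤ n - 2)
    (hpar : (n % 2 = 0 ∧ k % 2 = 0) ∨ n % 2 = 1)
    (h : trip 0 ((n-2 : ℕ) : Fin n) ((k-1 : ℕ) : Fin n) ∈ H) :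
    trip 0 ((1:ℕ) : Fin n) ((2:ℕ) : Fin n) ∈ H := by
  rcases eq_or_ne k 2 with rfl|hk2'
  · exact directA hn hτ (by simpa using h)
  have hk3 : 3 ≤ k := by omega
  have hC := entryR hn hτ hk1 hk2 h
  rcases hpar with ⟨hne, hke⟩|hno
  · -- n even, k even (k ≥ 4)
    exact climbLoop hn hτ (by omega) (by omega) (by omega) hC
  rcases Nat.even_or_odd k with hke|hko
  · -- n odd, k even
    rcases eq_or_ne k (n-3) with rfl|hkn3
    · -- k = n-3 : C_{n-2} → C_4 → escape → climb from 6
      have h4 := Rn2to4 hn hτ (by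
        rwa [show (n-3+1 : ℕ) = n-2 by omega] at hC)
      have h6 := escape4 (by omega) hno hτ h4
      exact climbLoop hn hτ (by omega) (by omega) (by omega) h6
    · -- descend
      have : k + 1 ≤ n - 3 := by
        rcases hke with ⟨t, rfl⟩
        omega
      exact descendLoop hn hτ (by rcases hke with ⟨t, rfl⟩; omega) this hC
  · -- n odd, k odd
    rcases eq_or_ne k 3 with rfl|hk3'
    · -- k = 3: C_4
      rcases eq_or_ne n 5 with rfl|hn5
      · -- n = 5 : R then directA
        have h5 := R4general hn hτ hC
        exact directA hn hτ (by simpa using h5)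
      · have h6 := escape4 (by omega) hno hτ hC
        exact climbLoop hn hτ (by omega) (by omega) (by omega) h6
    · -- k odd ≥ 5 : climb
      obtain ⟨t, rfl⟩ := hko
      exact climbLoop hn hτ (by omega) (by omega) (by omega) hC
end assembly


section ax
variable {α : Type*} [DecidableEq α]
/-- swap a b * swap a c = trip a c b -/
lemma swap_swap_eq_trip {a b c : α} (hab : a ≠ b) (hac : a ≠ c) (hbc : b ≠ c) :
    Equiv.swap a b * Equiv.swap a c = trip a c b := by
  ext w
  rw [mul_apply]
  rcases eq_or_ne w a with rfl|hwa
  · rw [swap_apply_left, swap_apply_of_ne_of_ne hac.symm hbc.symm, trip_apply_fst hac hab]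
  rcases eq_or_ne w b with rfl|hwb
  · rw [swap_apply_of_ne_of_ne hab.symm hbc, swap_apply_right,
      trip_apply_thd]
  rcases eq_or_ne w c with rfl|hwc
  · rw [swap_apply_right, swap_apply_left, trip_apply_snd hab hbc.symm]
  · rw [swap_apply_of_ne_of_ne hwa hwc, swap_apply_of_ne_of_ne hwa hwb,
      trip_apply_other hwa hwc hwb]
end ax

section stageT
variable {n : ℕ} [NeZero n] {H : Subgroup (Perm (Fin n))}

/-- consecutive 3-cycles -/
lemma sTrip (hn : 5 ≤ n) (hτ : finRotate n ∈ H)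
    (hc : trip 0 ((1:ℕ):Fin n) ((2:ℕ):Fin n) ∈ H) (a : ℕ) :
    trip ((a:ℕ):Fin n) ((a+1 :ℕ):Fin n) ((a+2 :ℕ):Fin n) ∈ H := by
  have hs := moveShift (by omega) hτ a hc
  rwa [zero_add, fin_add_cast, fin_add_cast, Nat.add_comm 1 a, Nat.add_comm 2 a] at hs

lemma tMem (hn : 5 ≤ n) (hτ : finRotate n ∈ H)
    (hc : trip 0 ((1:ℕ):Fin n) ((2:ℕ):Fin n) ∈ H) :
    ∀ j, 2 ≤ j → j ≤ n-1 → trip 0 ((1:ℕ):Fin n) ((j:ℕ):Fin n) ∈ H := by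
  intro j
  induction j using Nat.strong_induction_on with
  | _ j ih =>
    intro h2 hle
    rcases eq_or_ne j 2 with rfl|hj2
    · exact hc
    rcases eq_or_ne j 3 with rfl|hj3
    · -- conjugate t_2 by trip 2 3 4
      have hσ := sTrip hn hτ hc 2
      have key := trip_conj (trip ((2:ℕ):Fin n) ((3:ℕ):Fin n) ((4:ℕ):Fin n))
        0 ((1:ℕ):Fin n) ((2:ℕ):Fin n)
      rw [trip_apply_other (x := ((2:ℕ):Fin n))
          (cast_ne_zero' (by rw [Nat.mod_eq_of_lt (by omega : 2 < n)]; omega)).symm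
          (cast_ne_zero' (by rw [Nat.mod_eq_of_lt (by omega : 3 < n)]; omega)).symm
          (cast_ne_zero' (by rw [Nat.mod_eq_of_lt (by omega : 4 < n)]; omega)).symm,
        trip_apply_other
          (cast_ne_cast (by rw [Nat.mod_eq_of_lt (by omega : 1 < n),
            Nat.mod_eq_of_lt (by omega : 2 < n)]; omega))
          (cast_ne_cast (by rw [Nat.mod_eq_of_lt (by omega : 1 < n),
            Nat.mod_eq_of_lt (by omega : 3 < n)]; omega))
          (cast_ne_cast (by rw [Nat.mod_eq_of_lt (by omega : 1 < n),
            Nat.mod_eq_of_lt (by omega : 4 < n)]; omega)),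
        trip_apply_fst
          (cast_ne_cast (by rw [Nat.mod_eq_of_lt (by omega : 2 < n),
            Nat.mod_eq_of_lt (by omega : 3 < n)]; omega))
          (cast_ne_cast (by rw [Nat.mod_eq_of_lt (by omega : 2 < n),
            Nat.mod_eq_of_lt (by omega : 4 < n)]; omega))] at key
      rw [← key]
      exact H.mul_mem (H.mul_mem hσ hc) (H.inv_mem hσ)
    · -- j ≥ 4 : conjugate t_{j-1} by trip (j-2) (j-1) j
      have h4 : 4 ≤ j := by omega
      have hprev := ih (j-1) (by omega) (by omega) (by omega)
      have hσ := sTrip hn hτ hc (j-2)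
      rw [show j-2+1 = j-1 by omega, show j-2+2 = j by omega] at hσ
      have key := trip_conj (trip ((j-2:ℕ):Fin n) ((j-1:ℕ):Fin n) ((j:ℕ):Fin n))
        0 ((1:ℕ):Fin n) ((j-1:ℕ):Fin n)
      rw [trip_apply_other (x := ((j-2:ℕ):Fin n))
          (cast_ne_zero' (by rw [Nat.mod_eq_of_lt (by omega : j-2 < n)]; omega)).symm
          (cast_ne_zero' (by rw [Nat.mod_eq_of_lt (by omega : j-1 < n)]; omega)).symm
          (cast_ne_zero' (by rw [Nat.mod_eq_of_lt (by omega : j < n)]; omega)).symm,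
        trip_apply_other
          (cast_ne_cast (by rw [Nat.mod_eq_of_lt (by omega : 1 < n),
            Nat.mod_eq_of_lt (by omega : j-2 < n)]; omega))
          (cast_ne_cast (by rw [Nat.mod_eq_of_lt (by omega : 1 < n),
            Nat.mod_eq_of_lt (by omega : j-1 < n)]; omega))
          (cast_ne_cast (by rw [Nat.mod_eq_of_lt (by omega : 1 < n),
            Nat.mod_eq_of_lt (by omega : j < n)]; omega)),
        trip_apply_snd
          (cast_ne_cast (by rw [Nat.mod_eq_of_lt (by omega : j-2 < n),
            Nat.mod_eq_of_lt (by omega : j < n)]; omega))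
          (cast_ne_cast (by rw [Nat.mod_eq_of_lt (by omega : j-1 < n),
            Nat.mod_eq_of_lt (by omega : j < n)]; omega))] at key
      rw [← key]
      exact H.mul_mem (H.mul_mem hσ hprev) (H.inv_mem hσ)

lemma tz (hn : 5 ≤ n) (hτ : finRotate n ∈ H)
    (hc : trip 0 ((1:ℕ):Fin n) ((2:ℕ):Fin n) ∈ H) {z : Fin n}
    (hz0 : z ≠ 0) (hz1 : z ≠ ((1:ℕ):Fin n)) : trip 0 ((1:ℕ):Fin n) z ∈ H := by
  have h2 : 2 ≤ z.val := by
    rcases Nat.lt_or_ge z.val 2 with h|h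
    · exfalso
      have h0 : z.val = 0 ∨ z.val = 1 := by omega
      rcases h0 with h0|h0
      · exact hz0 (Fin.ext h0)
      · exact hz1 (Fin.ext (by rw [h0, Fin.val_natCast, Nat.mod_eq_of_lt (by omega)]))
    · exact h
  have := tMem hn hτ hc z.val h2 (by omega)
  rwa [Fin.cast_val_eq_self] at this

/-- Stage P : swap 0 1 * swap x y ∈ H -/
lemma stageP (hn : 5 ≤ n) (hτ : finRotate n ∈ H)
    (hc : trip 0 ((1:ℕ):Fin n) ((2:ℕ):Fin n) ∈ H) {x y : Fin n} (hxy : x ≠ y) :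
    Equiv.swap 0 ((1:ℕ):Fin n) * Equiv.swap x y ∈ H := by
  have h01 : (0 : Fin n) ≠ ((1:ℕ):Fin n) :=
    (cast_ne_zero' (by rw [Nat.mod_eq_of_lt (by omega : 1 < n)]; omega)).symm
  -- generic helper facts
  rcases eq_or_ne x 0 with rfl|hx0
  · rcases eq_or_ne y ((1:ℕ):Fin n) with rfl|hy1
    · rw [Equiv.swap_mul_self]; exact H.one_mem
    · -- swap 0 1 * swap 0 y = trip 0 y 1
      rw [swap_swap_eq_trip h01 hxy hy1.symm]
      exact moveI h01 hxy hy1.symm (tz hn hτ hc hxy.symm hy1)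
  rcases eq_or_ne y 0 with rfl|hy0
  · rw [Equiv.swap_comm x 0]
    rcases eq_or_ne x ((1:ℕ):Fin n) with rfl|hx1
    · rw [Equiv.swap_mul_self]; exact H.one_mem
    · rw [swap_swap_eq_trip h01 hxy.symm hx1.symm]
      exact moveI h01 hxy.symm hx1.symm (tz hn hτ hc hx0 hx1)
  rcases eq_or_ne x ((1:ℕ):Fin n) with rfl|hx1
  · exact tz hn hτ hc hy0 hxy.symm
  rcases eq_or_ne y ((1:ℕ):Fin n) with rfl|hy1
  · rw [Equiv.swap_comm x]; exact tz hn hτ hc hx0 hx1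
  · -- generic : swap 0 1 * swap x y = t_x * t_y⁻¹ * t_x
    have htx := tz hn hτ hc hx0 hx1
    have hty := tz hn hτ hc hy0 hy1
    have key : Equiv.swap 0 ((1:ℕ):Fin n) * Equiv.swap x y =
        trip 0 ((1:ℕ):Fin n) x * (trip 0 ((1:ℕ):Fin n) y)⁻¹ * trip 0 ((1:ℕ):Fin n) x := by
      have hswap : Equiv.swap ((1:ℕ):Fin n) x * Equiv.swap ((1:ℕ):Fin n) y *
          Equiv.swap ((1:ℕ):Fin n) x = Equiv.swap x y := by
        have := Equiv.swap_apply_apply (Equiv.swap ((1:ℕ):Fin n) x) ((1:ℕ):Fin n) y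
        rw [swap_apply_left, swap_apply_of_ne_of_ne hy1 hxy.symm,
          Equiv.swap_inv] at this
        exact this.symm
      calc Equiv.swap 0 ((1:ℕ):Fin n) * Equiv.swap x y
          = Equiv.swap 0 ((1:ℕ):Fin n) * (Equiv.swap ((1:ℕ):Fin n) x *
            Equiv.swap ((1:ℕ):Fin n) y * Equiv.swap ((1:ℕ):Fin n) x) := by rw [hswap]
        _ = _ := by
            simp only [trip, mul_inv_rev, Equiv.swap_inv, mul_assoc]
            rw [Equiv.swap_mul_self_mul]
    rw [key]
    exact H.mul_mem (H.mul_mem htx (H.inv_mem hty)) htx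

/-- Stage F : every 3-cycle is in H -/
lemma stageF (hn : 5 ≤ n) (hτ : finRotate n ∈ H)
    (hc : trip 0 ((1:ℕ):Fin n) ((2:ℕ):Fin n) ∈ H) {g : Perm (Fin n)}
    (hg : g.IsThreeCycle) : g ∈ H := by
  obtain ⟨a, ha⟩ : ∃ a, g a ≠ a := by
    by_contra hcon
    push_neg at hcon
    have : g = 1 := Equiv.ext fun w => hcon w
    rw [this] at hg
    simpa using hg.card_support
  have hcube : g * g * g = 1 := by
    have h3 := hg.orderOf
    have := pow_orderOf_eq_one g
    rw [h3, pow_succ, pow_succ, pow_one] at this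
    exact this
  have hgg : g (g a) ≠ g a := fun hc' => ha (g.injective hc')
  have hd : g (g (g a)) = a := by
    have := congrArg (fun σ => σ a) hcube
    simpa [mul_apply] using this
  have hda : g (g a) ≠ a := by
    intro hc'
    have h2 := congrArg g hc'
    rw [hd] at h2
    exact ha h2.symm
  -- g = trip a (g a) (g (g a))
  have hsupp : g.support = {a, g a, g (g a)} := by
    refine (Finset.eq_of_subset_of_card_le ?_ ?_).symm
    · intro w hw
      simp only [Finset.mem_insert, Finset.mem_singleton] at hw
      rcases hw with rfl|rfl|rfl
      · exact mem_support.2 ha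
      · exact mem_support.2 hgg
      · exact mem_support.2 (by rw [hd]; exact hda.symm)
    · rw [hg.card_support]
      rw [Finset.card_insert_of_notMem (by
          simp only [Finset.mem_insert, Finset.mem_singleton]
          push_neg
          exact ⟨ha.symm, hda.symm⟩),
        Finset.card_insert_of_notMem (by
          simp only [Finset.mem_singleton]
          exact fun h => hgg h.symm),
        Finset.card_singleton]
  have hgeq : g = trip a (g a) (g (g a)) := by
    refine Equiv.ext fun w => ?_
    rcases eq_or_ne w a with rfl|hwa
    · rw [trip_apply_fst ha.symm hda.symm]
    rcases eq_or_ne w (g a) with rfl|hwb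
    · rw [trip_apply_snd hda.symm hgg.symm]
    rcases eq_or_ne w (g (g a)) with rfl|hwc
    · rw [trip_apply_thd, hd]
    · rw [trip_apply_other hwa hwb hwc]
      have : w ∉ g.support := by
        rw [hsupp]
        simp [hwa, hwb, hwc]
      exact notMem_support.1 this
  rw [hgeq, trip]
  have e : Equiv.swap a (g a) * Equiv.swap (g a) (g (g a)) =
      (Equiv.swap a (g a) * Equiv.swap 0 ((1:ℕ):Fin n)) *
      (Equiv.swap 0 ((1:ℕ):Fin n) * Equiv.swap (g a) (g (g a))) := by
    rw [← mul_assoc, mul_assoc (Equiv.swap a (g a)), Equiv.swap_mul_self, mul_one]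
  rw [e]
  refine H.mul_mem ?_ (stageP hn hτ hc hgg.symm)
  have := H.inv_mem (stageP hn hτ hc (show a ≠ g a from ha.symm))
  rwa [mul_inv_rev, Equiv.swap_inv, Equiv.swap_inv] at this
end stageT


section word
variable {n : ℕ} [NeZero n]

lemma flip_val (k : ℕ) (hk : k ≤ n) (i : Fin n) :
    ((otFlip n k) i).val = if i.val < k then k - 1 - i.val else i.val := by
  by_cases h : i.val < k
  · simp [otFlip, Function.Involutive.coe_toPerm, h, hk]
  · simp [otFlip, Function.Involutive.toPerm, h]

lemma rot_val (hn : 2 ≤ n) (i : Fin n) :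
    ((finRotate n) i).val = if i.val = n - 1 then 0 else i.val + 1 := by
  rw [rot_apply hn, Fin.add_def]
  show (i.val + (1 : Fin n).val) % n = _
  rw [Fin.val_one', Nat.mod_eq_of_lt (by omega : 1 < n)]
  by_cases h : i.val = n - 1
  · rw [if_pos h, show i.val + 1 = n by omega, Nat.mod_self]
  · rw [if_neg h, Nat.mod_eq_of_lt (by have := i.isLt; omega)]

lemma tripC_val (hn : 4 ≤ n) {k : ℕ} (hk1 : 2 ≤ k) (hk2 : k ≤ n - 2) (i : Fin n) :
    ((trip (0 : Fin n) ((n-2 : ℕ) : Fin n) ((k-1 : ℕ) : Fin n)) i).val =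
      if i.val = 0 then n-2 else if i.val = n-2 then k-1 else if i.val = k-1 then 0
        else i.val := by
  have c2 : ((n-2 : ℕ) : Fin n).val = n-2 := by
    rw [Fin.val_natCast, Nat.mod_eq_of_lt (by omega)]
  have c1 : ((k-1 : ℕ) : Fin n).val = k-1 := by
    rw [Fin.val_natCast, Nat.mod_eq_of_lt (by omega)]
  have d1 : (0 : Fin n) ≠ ((n-2 : ℕ) : Fin n) := by
    rw [Ne, Fin.ext_iff, c2]; simp; omega
  have d2 : (0 : Fin n) ≠ ((k-1 : ℕ) : Fin n) := by
    rw [Ne, Fin.ext_iff, c1]; simp; omega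
  have d3 : ((n-2 : ℕ) : Fin n) ≠ ((k-1 : ℕ) : Fin n) := by
    rw [Ne, Fin.ext_iff, c1, c2]; omega
  rcases eq_or_ne i.val 0 with h0|h0
  · rw [if_pos h0, show i = 0 from Fin.ext h0, trip_apply_fst d1 d2, c2]
  rcases eq_or_ne i.val (n-2) with h1|h1
  · rw [if_neg h0, if_pos h1, show i = ((n-2:ℕ) : Fin n) from Fin.ext (by rw [c2, h1]),
      trip_apply_snd d2 d3, c1]
  rcases eq_or_ne i.val (k-1) with h2|h2
  · rw [if_neg h0, if_neg h1, if_pos h2, show i = ((k-1:ℕ) : Fin n) from Fin.ext (by rw [c1, h2]),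
      trip_apply_thd]
    rfl
  · rw [if_neg h0, if_neg h1, if_neg h2,
      trip_apply_other (by rw [Ne, Fin.ext_iff]; simpa using h0)
        (by rw [Ne, Fin.ext_iff, c2]; exact h1) (by rw [Ne, Fin.ext_iff, c1]; exact h2)]

set_option maxHeartbeats 1000000 in
lemma wordIdentity (hn : 4 ≤ n) {k : ℕ} (hk1 : 2 ≤ k) (hk2 : k ≤ n - 2) :
    otFlip n k * finRotate n * otFlip n k * finRotate n =
      finRotate n * otFlip n k * finRotate n * otFlip n k *
        trip (0 : Fin n) ((n-2 : ℕ) : Fin n) ((k-1 : ℕ) : Fin n) := by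
  have hn2 : 2 ≤ n := by omega
  have hkn : k ≤ n := by omega
  refine Equiv.ext fun i => ?_
  rw [Fin.ext_iff]
  simp only [mul_apply]
  have hik := i.isLt
  rcases (show i.val = 0 ∨ (1 ≤ i.val ∧ i.val ≤ k - 2) ∨ i.val = k - 1 ∨
      (k ≤ i.val ∧ i.val ≤ n - 3) ∨ i.val = n - 2 ∨ i.val = n - 1 from by omega)
    with h0|h0|h0|h0|h0|h0
  · -- region
    have e1 : ((finRotate n) i).val = i.val + 1 := by
      rw [rot_val hn2, if_neg (by omega)] <;> omega
    have e2 : ((otFlip n k) ((finRotate n) i)).val = k - 2 - i.val := by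
      rw [flip_val (n := n) k hkn, e1, if_pos (by omega)] <;> omega
    have e3 : ((finRotate n) ((otFlip n k) ((finRotate n) i))).val = k - 1 - i.val := by
      rw [rot_val hn2, e2, if_neg (by omega)] <;> omega
    have e4 : ((otFlip n k) ((finRotate n) ((otFlip n k) ((finRotate n) i)))).val = i.val := by
      rw [flip_val (n := n) k hkn, e3, if_pos (by omega)] <;> omega
    have f0 : ((trip (0 : Fin n) ((n-2 : ℕ) : Fin n) ((k-1 : ℕ) : Fin n)) i).val = n - 2 := by
      rw [tripC_val hn hk1 hk2, if_pos (by omega)] <;> omega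
    have f1 : ((otFlip n k) ((trip (0 : Fin n) ((n-2 : ℕ) : Fin n) ((k-1 : ℕ) : Fin n)) i)).val = n - 2 := by
      rw [flip_val (n := n) k hkn, f0, if_neg (by omega)] <;> omega
    have f2 : ((finRotate n) ((otFlip n k) ((trip (0 : Fin n) ((n-2 : ℕ) : Fin n) ((k-1 : ℕ) : Fin n)) i))).val = n - 1 := by
      rw [rot_val hn2, f1, if_neg (by omega)] <;> omega
    have f3 : ((otFlip n k) ((finRotate n) ((otFlip n k) ((trip (0 : Fin n) ((n-2 : ℕ) : Fin n) ((k-1 : ℕ) : Fin n)) i)))).val = n - 1 := by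
      rw [flip_val (n := n) k hkn, f2, if_neg (by omega)] <;> omega
    have f4 : ((finRotate n) ((otFlip n k) ((finRotate n) ((otFlip n k) ((trip (0 : Fin n) ((n-2 : ℕ) : Fin n) ((k-1 : ℕ) : Fin n)) i))))).val = 0 := by
      rw [rot_val hn2, f3, if_pos (by omega)] <;> omega
    rw [e4, f4] <;> omega
  · -- region
    have e1 : ((finRotate n) i).val = i.val + 1 := by
      rw [rot_val hn2, if_neg (by omega)] <;> omega
    have e2 : ((otFlip n k) ((finRotate n) i)).val = k - 2 - i.val := by
      rw [flip_val (n := n) k hkn, e1, if_pos (by omega)] <;> omega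
    have e3 : ((finRotate n) ((otFlip n k) ((finRotate n) i))).val = k - 1 - i.val := by
      rw [rot_val hn2, e2, if_neg (by omega)] <;> omega
    have e4 : ((otFlip n k) ((finRotate n) ((otFlip n k) ((finRotate n) i)))).val = i.val := by
      rw [flip_val (n := n) k hkn, e3, if_pos (by omega)] <;> omega
    have f0 : ((trip (0 : Fin n) ((n-2 : ℕ) : Fin n) ((k-1 : ℕ) : Fin n)) i).val = i.val := by
      rw [tripC_val hn hk1 hk2, if_neg (by omega), if_neg (by omega), if_neg (by omega)] <;> omega
    have f1 : ((otFlip n k) ((trip (0 : Fin n) ((n-2 : ℕ) : Fin n) ((k-1 : ℕ) : Fin n)) i)).val = k - 1 - i.val := by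
      rw [flip_val (n := n) k hkn, f0, if_pos (by omega)] <;> omega
    have f2 : ((finRotate n) ((otFlip n k) ((trip (0 : Fin n) ((n-2 : ℕ) : Fin n) ((k-1 : ℕ) : Fin n)) i))).val = k - i.val := by
      rw [rot_val hn2, f1, if_neg (by omega)] <;> omega
    have f3 : ((otFlip n k) ((finRotate n) ((otFlip n k) ((trip (0 : Fin n) ((n-2 : ℕ) : Fin n) ((k-1 : ℕ) : Fin n)) i)))).val = i.val - 1 := by
      rw [flip_val (n := n) k hkn, f2, if_pos (by omega)] <;> omega
    have f4 : ((finRotate n) ((otFlip n k) ((finRotate n) ((otFlip n k) ((trip (0 : Fin n) ((n-2 : ℕ) : Fin n) ((k-1 : ℕ) : Fin n)) i))))).val = i.val := by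
      rw [rot_val hn2, f3, if_neg (by omega)] <;> omega
    rw [e4, f4] <;> omega
  · -- region
    have e1 : ((finRotate n) i).val = k := by
      rw [rot_val hn2, if_neg (by omega)] <;> omega
    have e2 : ((otFlip n k) ((finRotate n) i)).val = k := by
      rw [flip_val (n := n) k hkn, e1, if_neg (by omega)] <;> omega
    have e3 : ((finRotate n) ((otFlip n k) ((finRotate n) i))).val = k + 1 := by
      rw [rot_val hn2, e2, if_neg (by omega)] <;> omega
    have e4 : ((otFlip n k) ((finRotate n) ((otFlip n k) ((finRotate n) i)))).val = k + 1 := by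
      rw [flip_val (n := n) k hkn, e3, if_neg (by omega)] <;> omega
    have f0 : ((trip (0 : Fin n) ((n-2 : ℕ) : Fin n) ((k-1 : ℕ) : Fin n)) i).val = 0 := by
      rw [tripC_val hn hk1 hk2, if_neg (by omega), if_neg (by omega), if_pos (by omega)] <;> omega
    have f1 : ((otFlip n k) ((trip (0 : Fin n) ((n-2 : ℕ) : Fin n) ((k-1 : ℕ) : Fin n)) i)).val = k - 1 := by
      rw [flip_val (n := n) k hkn, f0, if_pos (by omega)] <;> omega
    have f2 : ((finRotate n) ((otFlip n k) ((trip (0 : Fin n) ((n-2 : ℕ) : Fin n) ((k-1 : ℕ) : Fin n)) i))).val = k := by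
      rw [rot_val hn2, f1, if_neg (by omega)] <;> omega
    have f3 : ((otFlip n k) ((finRotate n) ((otFlip n k) ((trip (0 : Fin n) ((n-2 : ℕ) : Fin n) ((k-1 : ℕ) : Fin n)) i)))).val = k := by
      rw [flip_val (n := n) k hkn, f2, if_neg (by omega)] <;> omega
    have f4 : ((finRotate n) ((otFlip n k) ((finRotate n) ((otFlip n k) ((trip (0 : Fin n) ((n-2 : ℕ) : Fin n) ((k-1 : ℕ) : Fin n)) i))))).val = k + 1 := by
      rw [rot_val hn2, f3, if_neg (by omega)] <;> omega
    rw [e4, f4] <;> omega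
  · -- region
    have e1 : ((finRotate n) i).val = i.val + 1 := by
      rw [rot_val hn2, if_neg (by omega)] <;> omega
    have e2 : ((otFlip n k) ((finRotate n) i)).val = i.val + 1 := by
      rw [flip_val (n := n) k hkn, e1, if_neg (by omega)] <;> omega
    have e3 : ((finRotate n) ((otFlip n k) ((finRotate n) i))).val = i.val + 2 := by
      rw [rot_val hn2, e2, if_neg (by omega)] <;> omega
    have e4 : ((otFlip n k) ((finRotate n) ((otFlip n k) ((finRotate n) i)))).val = i.val + 2 := by
      rw [flip_val (n := n) k hkn, e3, if_neg (by omega)] <;> omega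
    have f0 : ((trip (0 : Fin n) ((n-2 : ℕ) : Fin n) ((k-1 : ℕ) : Fin n)) i).val = i.val := by
      rw [tripC_val hn hk1 hk2, if_neg (by omega), if_neg (by omega), if_neg (by omega)] <;> omega
    have f1 : ((otFlip n k) ((trip (0 : Fin n) ((n-2 : ℕ) : Fin n) ((k-1 : ℕ) : Fin n)) i)).val = i.val := by
      rw [flip_val (n := n) k hkn, f0, if_neg (by omega)] <;> omega
    have f2 : ((finRotate n) ((otFlip n k) ((trip (0 : Fin n) ((n-2 : ℕ) : Fin n) ((k-1 : ℕ) : Fin n)) i))).val = i.val + 1 := by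
      rw [rot_val hn2, f1, if_neg (by omega)] <;> omega
    have f3 : ((otFlip n k) ((finRotate n) ((otFlip n k) ((trip (0 : Fin n) ((n-2 : ℕ) : Fin n) ((k-1 : ℕ) : Fin n)) i)))).val = i.val + 1 := by
      rw [flip_val (n := n) k hkn, f2, if_neg (by omega)] <;> omega
    have f4 : ((finRotate n) ((otFlip n k) ((finRotate n) ((otFlip n k) ((trip (0 : Fin n) ((n-2 : ℕ) : Fin n) ((k-1 : ℕ) : Fin n)) i))))).val = i.val + 2 := by
      rw [rot_val hn2, f3, if_neg (by omega)] <;> omega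
    rw [e4, f4] <;> omega
  · -- region
    have e1 : ((finRotate n) i).val = n - 1 := by
      rw [rot_val hn2, if_neg (by omega)] <;> omega
    have e2 : ((otFlip n k) ((finRotate n) i)).val = n - 1 := by
      rw [flip_val (n := n) k hkn, e1, if_neg (by omega)] <;> omega
    have e3 : ((finRotate n) ((otFlip n k) ((finRotate n) i))).val = 0 := by
      rw [rot_val hn2, e2, if_pos (by omega)] <;> omega
    have e4 : ((otFlip n k) ((finRotate n) ((otFlip n k) ((finRotate n) i)))).val = k - 1 := by
      rw [flip_val (n := n) k hkn, e3, if_pos (by omega)] <;> omega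
    have f0 : ((trip (0 : Fin n) ((n-2 : ℕ) : Fin n) ((k-1 : ℕ) : Fin n)) i).val = k - 1 := by
      rw [tripC_val hn hk1 hk2, if_neg (by omega), if_pos (by omega)] <;> omega
    have f1 : ((otFlip n k) ((trip (0 : Fin n) ((n-2 : ℕ) : Fin n) ((k-1 : ℕ) : Fin n)) i)).val = 0 := by
      rw [flip_val (n := n) k hkn, f0, if_pos (by omega)] <;> omega
    have f2 : ((finRotate n) ((otFlip n k) ((trip (0 : Fin n) ((n-2 : ℕ) : Fin n) ((k-1 : ℕ) : Fin n)) i))).val = 1 := by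
      rw [rot_val hn2, f1, if_neg (by omega)] <;> omega
    have f3 : ((otFlip n k) ((finRotate n) ((otFlip n k) ((trip (0 : Fin n) ((n-2 : ℕ) : Fin n) ((k-1 : ℕ) : Fin n)) i)))).val = k - 2 := by
      rw [flip_val (n := n) k hkn, f2, if_pos (by omega)] <;> omega
    have f4 : ((finRotate n) ((otFlip n k) ((finRotate n) ((otFlip n k) ((trip (0 : Fin n) ((n-2 : ℕ) : Fin n) ((k-1 : ℕ) : Fin n)) i))))).val = k - 1 := by
      rw [rot_val hn2, f3, if_neg (by omega)] <;> omega
    rw [e4, f4] <;> omega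
  · -- region
    have e1 : ((finRotate n) i).val = 0 := by
      rw [rot_val hn2, if_pos (by omega)] <;> omega
    have e2 : ((otFlip n k) ((finRotate n) i)).val = k - 1 := by
      rw [flip_val (n := n) k hkn, e1, if_pos (by omega)] <;> omega
    have e3 : ((finRotate n) ((otFlip n k) ((finRotate n) i))).val = k := by
      rw [rot_val hn2, e2, if_neg (by omega)] <;> omega
    have e4 : ((otFlip n k) ((finRotate n) ((otFlip n k) ((finRotate n) i)))).val = k := by
      rw [flip_val (n := n) k hkn, e3, if_neg (by omega)] <;> omega
    have f0 : ((trip (0 : Fin n) ((n-2 : ℕ) : Fin n) ((k-1 : ℕ) : Fin n)) i).val = i.val := by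
      rw [tripC_val hn hk1 hk2, if_neg (by omega), if_neg (by omega), if_neg (by omega)] <;> omega
    have f1 : ((otFlip n k) ((trip (0 : Fin n) ((n-2 : ℕ) : Fin n) ((k-1 : ℕ) : Fin n)) i)).val = i.val := by
      rw [flip_val (n := n) k hkn, f0, if_neg (by omega)] <;> omega
    have f2 : ((finRotate n) ((otFlip n k) ((trip (0 : Fin n) ((n-2 : ℕ) : Fin n) ((k-1 : ℕ) : Fin n)) i))).val = 0 := by
      rw [rot_val hn2, f1, if_pos (by omega)] <;> omega
    have f3 : ((otFlip n k) ((finRotate n) ((otFlip n k) ((trip (0 : Fin n) ((n-2 : ℕ) : Fin n) ((k-1 : ℕ) : Fin n)) i)))).val = k - 1 := by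
      rw [flip_val (n := n) k hkn, f2, if_pos (by omega)] <;> omega
    have f4 : ((finRotate n) ((otFlip n k) ((finRotate n) ((otFlip n k) ((trip (0 : Fin n) ((n-2 : ℕ) : Fin n) ((k-1 : ℕ) : Fin n)) i))))).val = k := by
      rw [rot_val hn2, f3, if_neg (by omega)] <;> omega
    rw [e4, f4] <;> omega

end word

end AuxTrip

theorem stmt17 (n k : ℕ) (hn : 4 ≤ n) (hk1 : 1 < k) (hk2 : k < n - 1)
    (h : (Even n ∧ Even k) ∨ Odd n) :
    alternatingGroup (Fin n) ≤ Subgroup.closure {finRotate n, otFlip n k} := by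
  have hk2' : k ≤ n - 2 := by omega
  rcases eq_or_ne n 4 with rfl|hn4
  · -- n = 4, k = 2 : the group is everything
    obtain rfl : k = 2 := by omega
    have e1 : otFlip 4 2 = Equiv.swap (0 : Fin 4) ((finRotate 4) (0 : Fin 4)) := by decide
    have e2 : Subgroup.closure {finRotate 4, otFlip 4 2} = ⊤ := by
      rw [e1]
      exact Equiv.Perm.closure_cycle_adjacent_swap
        (by exact isCycle_finRotate (n := 2)) (by exact support_finRotate (n := 2)) 0
    rw [e2]
    exact le_top
  · have hn5 : 5 ≤ n := by omega
    haveI : NeZero n := ⟨by omega⟩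
    set H := Subgroup.closure {finRotate n, otFlip n k} with hH
    have hτ : finRotate n ∈ H := Subgroup.subset_closure (Set.mem_insert _ _)
    have hφ : otFlip n k ∈ H :=
      Subgroup.subset_closure (Set.mem_insert_of_mem _ rfl)
    -- the word gives the basic 3-cycle
    open Fin.NatCast in
    have hW : trip (0 : Fin n) ((n-2 : ℕ) : Fin n) ((k-1 : ℕ) : Fin n) ∈ H := by
      have hid := wordIdentity (n := n) (by omega) (by omega : 2 ≤ k) hk2'
      have : trip (0 : Fin n) ((n-2 : ℕ) : Fin n) ((k-1 : ℕ) : Fin n) =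
          (finRotate n * otFlip n k * finRotate n * otFlip n k)⁻¹ *
          (otFlip n k * finRotate n * otFlip n k * finRotate n) := by
        rw [hid]
        group
      rw [this]
      refine H.mul_mem (H.inv_mem ?_) ?_
      · exact H.mul_mem (H.mul_mem (H.mul_mem hτ hφ) hτ) hφ
      · exact H.mul_mem (H.mul_mem (H.mul_mem hφ hτ) hφ) hτ
    -- walk to the consecutive 3-cycle (0 1 2)
    have hpar : (n % 2 = 0 ∧ k % 2 = 0) ∨ n % 2 = 1 := by
      rcases h with ⟨he, hke⟩|ho
      · exact Or.inl ⟨Nat.even_iff.mp he, Nat.even_iff.mp hke⟩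
      · exact Or.inr (Nat.odd_iff.mp ho)
    open Fin.NatCast in
    have hc : trip (0 : Fin n) ((1:ℕ) : Fin n) ((2:ℕ) : Fin n) ∈ H :=
      toConsec hn5 hτ (by omega : 2 ≤ k) hk2' hpar hW
    -- all 3-cycles are in H, hence the alternating group is
    rw [← Equiv.Perm.closure_three_cycles_eq_alternating]
    refine (Subgroup.closure_le _).2 ?_
    rintro σ hσ
    exact stageF hn5 hτ hc hσ
end
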